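/- Let c, d : ℤ × ℝ → ℝ be differentiable in x and satisfy ∂_x c(n) = c(n) c(n+1) d(n+1) and ∂_x d(n) = −d(n) d(n−1) c(n−1) for all n ∈ ℤ. Define w(n) = c(n) d(n+1), for each integer s ≥ 0 the quantity w_s(n) = c(n) d(n−s), and π_s(n) = ∏_{i=1}^{s} w(n−i) (with π_0 = 1). Then for all n ∈ ℤ: (a) w_0(n+1) − w_0(n) = ∂_x c(n)/c(n) + ∂_x d(n+1)/d(n+1) wherever c(n) and d(n+1) are nonzero (i.e. Δw_0 = ∂_x ln w); and (b) for every integer s ≥ 0, π_{s+1}(n+1) w_{s+1}(n+1) − π_{s+1}(n) w_{s+1}(n) = π_s(n) · ∂_x w_s(n). -/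

import Mathlib

lemma prod_shift_aux (f : ℤ → ℝ) (n : ℤ) (s : ℕ) :
    ∏ i ∈ Finset.Icc 1 (s + 1), f (n + 1 - (i : ℤ))
      = f n * ∏ i ∈ Finset.Icc 1 s, f (n - (i : ℤ)) := by
  induction s with
  | zero => simp
  | succ s ih =>
      rw [Finset.prod_Icc_succ_top (by omega : 1 ≤ s + 1 + 1), ih,
        Finset.prod_Icc_succ_top (by omega : 1 ≤ s + 1)]
      have h : n + 1 - ((s : ℤ) + 1 + 1) = n - ((s : ℤ) + 1) := by ring
      push_cast
      rw [h]
      ring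

/-- Under the constrained D∆mKP(E) x-flow, the expressions `w = c(n)d(n+1)`,
`w_s = c(n)d(n-s)` satisfy the defining recursion of the D∆mKP(E)
coefficients (local difference form). -/
theorem dDmKPE_coefficients
    (c d : ℤ → ℝ → ℝ)
    (hc : ∀ n x, HasDerivAt (c n) (c n x * c (n + 1) x * d (n + 1) x) x)
    (hd : ∀ n x, HasDerivAt (d n) (-(d n x * d (n - 1) x * c (n - 1) x)) x) :
    let w : ℤ → ℝ → ℝ := fun n x => c n x * d (n + 1) x
    let ws : ℕ → ℤ → ℝ → ℝ := fun s n x => c n x * d (n - (s : ℤ)) x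
    let pis : ℕ → ℤ → ℝ → ℝ := fun s n x => ∏ i ∈ Finset.Icc 1 s, w (n - (i : ℤ)) x
    (∀ n x, c n x ≠ 0 → d (n + 1) x ≠ 0 →
      ws 0 (n + 1) x - ws 0 n x
        = deriv (c n) x / c n x + deriv (d (n + 1)) x / d (n + 1) x) ∧
    (∀ s : ℕ, ∀ n x,
      pis (s + 1) (n + 1) x * ws (s + 1) (n + 1) x
        - pis (s + 1) n x * ws (s + 1) n x
        = pis s n x * deriv (fun y => ws s n y) x) := by
  intro w ws pis
  constructor
  · intro n x hcn hdn
    rw [(hc n x).deriv, (hd (n + 1) x).deriv]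
    simp only [ws]
    have h1 : n + 1 - 1 = n := by ring
    rw [h1]
    field_simp
    ring
  · intro s n x
    have hder : deriv (fun y => ws s n y) x
        = c n x * c (n + 1) x * d (n + 1) x * d (n - (s : ℤ)) x
          + c n x * (-(d (n - (s : ℤ)) x * d (n - (s : ℤ) - 1) x * c (n - (s : ℤ) - 1) x)) := by
      exact ((hc n x).mul (hd (n - (s : ℤ)) x)).deriv
    simp only [ws, pis]
    have key := prod_shift_aux (fun m => w m x) n s
    rw [hder, key, Finset.prod_Icc_succ_top (by omega : 1 ≤ s + 1)]
    have h2 : (n : ℤ) - ((s : ℤ) + 1) + 1 = n - s := by ring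
    have h3 : (n : ℤ) + 1 - ((s : ℤ) + 1) = n - s := by ring
    simp only [w]
    push_cast
    rw [h2, h3]
    have h4 : (n : ℤ) - ((s : ℤ) + 1) = n - s - 1 := by ring
    rw [h4]
    ring
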